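/- For every ε > 0 there exist a constant c > 0 and N ∈ ℕ such that for all n ≥ N and all x, Y ∈ {0,1}^n with ‖Y − x‖₁ ≥ 0.5·n^{0.9} − 1, we have Pr_{x̃ ~ RR_ε(x)}[‖Y − x̃‖₁ ≤ n/(1 + e^ε) + n^{0.6}] ≤ exp(−c·n^{0.8}). -/

import Mathlib

open scoped ENNReal

/-- Probability that a sample from `p` lands in `S`. -/
noncomputable def pr {Y : Type*} (p : PMF Y) (S : Set Y) : ℝ :=
  (p.toOuterMeasure S).toReal

/-- Product of independent `PMF`s on `Bool`, coordinate by coordinate. -/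
noncomputable def piPMF : (n : ℕ) → (Fin n → PMF Bool) → PMF (Fin n → Bool)
  | 0, _ => PMF.pure (fun i => Fin.elim0 i)
  | n + 1, f => (f 0).bind fun b => (piPMF n (fun i => f i.succ)).map (Fin.cons b)

/-- Randomized response: each coordinate of `x` is kept with probability
`e^ε / (1 + e^ε)` and flipped with probability `1 / (1 + e^ε)`, independently. -/
noncomputable def RR (ε : ℝ) {n : ℕ} (x : Fin n → Bool) : PMF (Fin n → Bool) :=
  piPMF n (fun i =>
    (PMF.bernoulli (Real.toNNReal (1 / (1 + Real.exp ε)))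
      (by
        rw [Real.toNNReal_le_one, div_le_one (by positivity)]
        linarith [Real.exp_pos ε])).map (fun θ => xor θ (x i)))


noncomputable def Ex {α : Type*} (p : PMF α) (g : α → ℝ≥0∞) : ℝ≥0∞ := ∑' a, p a * g a

lemma Ex_pure {α : Type*} (a : α) (g : α → ℝ≥0∞) : Ex (PMF.pure a) g = g a := by
  unfold Ex
  rw [tsum_eq_single a]
  · simp [PMF.pure_apply]
  · intro b hb; simp [PMF.pure_apply, hb]

lemma Ex_bind {α β : Type*} (p : PMF α) (q : α → PMF β) (g : β → ℝ≥0∞) :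
    Ex (p.bind q) g = Ex p (fun a => Ex (q a) g) := by
  unfold Ex
  simp only [PMF.bind_apply]
  calc (∑' b, (∑' a, p a * q a b) * g b)
      = ∑' b, ∑' a, p a * q a b * g b := by
        congr 1; ext b; rw [← ENNReal.tsum_mul_right]
    _ = ∑' a, ∑' b, p a * q a b * g b := ENNReal.tsum_comm
    _ = ∑' a, p a * ∑' b, q a b * g b := by
        congr 1; ext a
        rw [← ENNReal.tsum_mul_left]
        congr 1; ext b; ring

lemma Ex_map {α β : Type*} (p : PMF α) (f : α → β) (g : β → ℝ≥0∞) :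
    Ex (p.map f) g = Ex p (g ∘ f) := by
  rw [PMF.map, Ex_bind]
  congr 1
  ext a
  exact Ex_pure (f a) g

lemma Ex_bool (p : PMF Bool) (g : Bool → ℝ≥0∞) :
    Ex p g = p true * g true + p false * g false := by
  unfold Ex
  rw [tsum_bool]; ring

lemma Ex_congr {α : Type*} (p : PMF α) {g g' : α → ℝ≥0∞} (h : ∀ a, g a = g' a) :
    Ex p g = Ex p g' := by
  unfold Ex; congr 1; ext a; rw [h]

lemma Ex_const_mul {α : Type*} (p : PMF α) (c : ℝ≥0∞) (g : α → ℝ≥0∞) :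
    Ex p (fun a => c * g a) = c * Ex p g := by
  unfold Ex
  rw [← ENNReal.tsum_mul_left]
  congr 1; ext a; ring

lemma Ex_piPMF : ∀ (n : ℕ) (f : Fin n → PMF Bool) (h : Fin n → Bool → ℝ≥0∞),
    Ex (piPMF n f) (fun x => ∏ i, h i (x i)) = ∏ i, Ex (f i) (h i)
  | 0, f, h => by simp [piPMF, Ex_pure]
  | n + 1, f, h => by
    rw [piPMF, Ex_bind]
    rw [Fin.prod_univ_succ]
    have key : ∀ b, Ex ((piPMF n fun i => f i.succ).map (Fin.cons b))
        (fun x => ∏ i, h i (x i)) = h 0 b * ∏ i : Fin n, Ex (f i.succ) (h i.succ) := by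
      intro b
      rw [Ex_map]
      rw [Ex_congr _ (g' := fun x : Fin n → Bool => h 0 b * ∏ i : Fin n, h i.succ (x i))
        (fun x => by simp [Function.comp, Fin.prod_univ_succ])]
      rw [Ex_const_mul, Ex_piPMF n]
    rw [Ex_congr _ (g' := fun b => h 0 b * ∏ i : Fin n, Ex (f i.succ) (h i.succ)) key]
    rw [Ex_bool, Ex_bool]; ring

lemma chernoff (ε t m : ℝ) (hε : 0 < ε) (ht : 0 ≤ t) {n : ℕ} (x Y : Fin n → Bool) :
    pr (RR ε x) {xt | (hammingDist Y xt : ℝ) ≤ m} ≤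
      Real.exp (t * m - (1 - Real.exp (-t)) *
        (((n : ℝ) - hammingDist Y x) * (1 / (1 + Real.exp ε))
          + (hammingDist Y x) * (Real.exp ε / (1 + Real.exp ε)))) := by
  set q : ℝ := 1 / (1 + Real.exp ε) with hq
  set p : ℝ := Real.exp ε / (1 + Real.exp ε) with hp
  have hE : (0:ℝ) < 1 + Real.exp ε := by positivity
  have hq0 : 0 ≤ q := by positivity
  have hq1 : q ≤ 1 := by rw [hq, div_le_one hE]; linarith [Real.exp_pos ε]
  have hp0 : 0 ≤ p := by positivity
  have hp1 : p ≤ 1 := by rw [hp, div_le_one hE]; linarith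
  have hqp : q + p = 1 := by rw [hq, hp]; field_simp
  -- notation
  set S : Set (Fin n → Bool) := {xt | (hammingDist Y xt : ℝ) ≤ m} with hS
  set P := RR ε x with hP
  set h : Fin n → Bool → ℝ≥0∞ := fun i b =>
    ENNReal.ofReal (Real.exp (-t * (if Y i = b then 0 else 1))) with hh
  -- Step 1: pr ≤ toReal of Ex of exp tilt
  have hDsum : ∀ xt : Fin n → Bool,
      (hammingDist Y xt : ℝ) = ∑ i, (if Y i = xt i then (0:ℝ) else 1) := by
    intro xt
    rw [hammingDist]
    rw [Finset.card_filter]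
    push_cast
    congr 1; ext i
    by_cases hYx : Y i = xt i <;> simp [hYx]
  have step1 : P.toOuterMeasure S ≤
      Ex P (fun xt => ENNReal.ofReal (Real.exp (t * m)) * ∏ i, h i (xt i)) := by
    rw [PMF.toOuterMeasure_apply]
    unfold Ex
    apply ENNReal.tsum_le_tsum
    intro xt
    have hprod : ENNReal.ofReal (Real.exp (t * m)) * ∏ i, h i (xt i)
        = ENNReal.ofReal (Real.exp (t * (m - hammingDist Y xt))) := by
      rw [hh]
      rw [← ENNReal.ofReal_prod_of_nonneg (fun i _ => (Real.exp_pos _).le)]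
      rw [← Real.exp_sum, ← ENNReal.ofReal_mul (Real.exp_pos _).le, ← Real.exp_add]
      congr 2
      rw [hDsum xt, mul_sub, Finset.mul_sum, sub_eq_add_neg, ← Finset.sum_neg_distrib]
      refine congrArg _ (Finset.sum_congr rfl fun i _ => ?_)
      split <;> ring
    show S.indicator (⇑P) xt ≤ P xt * (ENNReal.ofReal (Real.exp (t * m)) * ∏ i, h i (xt i))
    rw [hprod]
    by_cases hxt : xt ∈ S
    · rw [Set.indicator_of_mem hxt]
      nth_rewrite 1 [← mul_one (P xt)]
      apply mul_le_mul_right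
      rw [show (1:ℝ≥0∞) = ENNReal.ofReal (Real.exp 0) by simp]
      apply ENNReal.ofReal_le_ofReal
      apply Real.exp_le_exp.mpr
      have : (hammingDist Y xt : ℝ) ≤ m := hxt
      nlinarith
    · rw [Set.indicator_of_notMem hxt]
      exact zero_le
  -- Step 2: factorize
  set ρ : Fin n → ℝ := fun i => if Y i = x i then q else p with hρ
  have hb : Real.toNNReal (1 / (1 + Real.exp ε)) ≤ 1 := by
    rw [Real.toNNReal_le_one, div_le_one (by positivity)]
    linarith [Real.exp_pos ε]
  have coord : ∀ i, Ex ((PMF.bernoulli (Real.toNNReal (1 / (1 + Real.exp ε))) hb).map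
      (fun θ => xor θ (x i))) (h i)
      ≤ ENNReal.ofReal (Real.exp (-((1 - Real.exp (-t)) * ρ i))) := by
    intro i
    rw [Ex_map, Ex_bool]
    have hc : ∀ r : ℝ, ((Real.toNNReal r : NNReal) : ℝ≥0∞) = ENNReal.ofReal r := fun r => rfl
    simp only [Function.comp, PMF.bernoulli_apply, cond, ENNReal.coe_sub, ENNReal.coe_one, hc]
    have h1q : (1 : ℝ≥0∞) - ENNReal.ofReal (1 / (1 + Real.exp ε)) = ENNReal.ofReal (1 - q) := by
      rw [ENNReal.ofReal_sub _ hq0, ENNReal.ofReal_one]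
    have het : (0:ℝ) ≤ Real.exp (-t) := (Real.exp_pos _).le
    have het1 : Real.exp (-t) ≤ 1 := Real.exp_le_one_iff.mpr (by linarith)
    have hbound : ∀ a : ℝ, 0 ≤ a → a ≤ 1 →
        (1 : ℝ) - a * (1 - Real.exp (-t)) ≤ Real.exp (-(( 1 - Real.exp (-t)) * a)) := by
      intro a ha0 ha1
      have := Real.add_one_le_exp (-((1 - Real.exp (-t)) * a))
      linarith
    by_cases hYx : Y i = x i
    · have hne : ¬ (Y i = !(x i)) := by rw [hYx]; cases x i <;> simp
      have e1 : h i (xor true (x i)) = ENNReal.ofReal (Real.exp (-t)) := by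
        rw [hh]; simp [hne]
      have e2 : h i (xor false (x i)) = 1 := by
        rw [hh]; simp [hYx]
      have hρi : ρ i = q := by rw [hρ]; simp [hYx]
      rw [e1, e2, h1q, mul_one, hρi, ← ENNReal.ofReal_mul hq0,
        ← ENNReal.ofReal_add (by positivity) (by linarith)]
      apply ENNReal.ofReal_le_ofReal
      have := hbound q hq0 hq1
      nlinarith
    · have hYx' : Y i = !(x i) := by cases hx : x i <;> cases hy : Y i <;> simp_all
      have e1 : h i (xor true (x i)) = 1 := by
        rw [hh]; simp [hYx']
      have e2 : h i (xor false (x i)) = ENNReal.ofReal (Real.exp (-t)) := by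
        rw [hh]
        have : ¬ (Y i = x i) := hYx
        simp [this]
      have hρi : ρ i = p := by rw [hρ]; simp [hYx]
      rw [e1, e2, h1q, mul_one, hρi, ← ENNReal.ofReal_mul (by linarith),
        ← ENNReal.ofReal_add (by positivity) (mul_nonneg (by linarith) het)]
      apply ENNReal.ofReal_le_ofReal
      have := hbound p hp0 hp1
      nlinarith
  -- Step 3: combine
  have hdn : hammingDist Y x ≤ n := by
    simpa using hammingDist_le_card_fintype (x := Y) (y := x)
  have hsum : ∑ i, ρ i = ((n:ℝ) - hammingDist Y x) * q + (hammingDist Y x) * p := by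
    rw [hρ]
    rw [Finset.sum_ite]
    rw [Finset.sum_const, Finset.sum_const]
    have hcard2 : (Finset.univ.filter fun i => ¬ (Y i = x i)).card = hammingDist Y x := by
      rw [hammingDist]
    have hcard1 : ((Finset.univ.filter fun i => Y i = x i).card : ℝ)
        = (n:ℝ) - hammingDist Y x := by
      have := Finset.card_filter_add_card_filter_not
        (s := (Finset.univ : Finset (Fin n))) (p := fun i => Y i = x i)
      rw [hcard2] at this
      simp only [Finset.card_univ, Fintype.card_fin] at this
      have := congrArg (fun k : ℕ => (k : ℝ)) this
      push_cast at this
      linarith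
    rw [hcard2, nsmul_eq_mul, nsmul_eq_mul, hcard1]
  have step2 : Ex P (fun xt => ENNReal.ofReal (Real.exp (t * m)) * ∏ i, h i (xt i))
      ≤ ENNReal.ofReal (Real.exp (t * m - (1 - Real.exp (-t)) * ∑ i, ρ i)) := by
    rw [Ex_const_mul]
    have hfac : Ex P (fun xt => ∏ i, h i (xt i))
        = ∏ i, Ex ((PMF.bernoulli (Real.toNNReal (1 / (1 + Real.exp ε))) hb).map
            (fun θ => xor θ (x i))) (h i) := by
      rw [hP, RR]
      exact Ex_piPMF n _ h
    rw [hfac]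
    calc ENNReal.ofReal (Real.exp (t * m)) * ∏ i, Ex ((PMF.bernoulli
            (Real.toNNReal (1 / (1 + Real.exp ε))) hb).map (fun θ => xor θ (x i))) (h i)
        ≤ ENNReal.ofReal (Real.exp (t * m)) *
            ∏ i, ENNReal.ofReal (Real.exp (-((1 - Real.exp (-t)) * ρ i))) := by
          exact mul_le_mul_right (Finset.prod_le_prod' fun i _ => coord i) _
      _ = ENNReal.ofReal (Real.exp (t * m - (1 - Real.exp (-t)) * ∑ i, ρ i)) := by
          rw [← ENNReal.ofReal_prod_of_nonneg (fun i _ => (Real.exp_pos _).le)]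
          rw [← Real.exp_sum, ← ENNReal.ofReal_mul (Real.exp_pos _).le, ← Real.exp_add]
          congr 2
          rw [Finset.mul_sum, Finset.sum_neg_distrib, ← sub_eq_add_neg]
  have hle : P.toOuterMeasure S ≤
      ENNReal.ofReal (Real.exp (t * m - (1 - Real.exp (-t)) * ∑ i, ρ i)) :=
    le_trans step1 step2
  rw [hsum] at hle
  unfold pr
  calc (P.toOuterMeasure S).toReal
      ≤ (ENNReal.ofReal (Real.exp (t * m - (1 - Real.exp (-t)) *
          (((n:ℝ) - hammingDist Y x) * q + (hammingDist Y x) * p)))).toReal :=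
        ENNReal.toReal_mono ENNReal.ofReal_ne_top hle
    _ = Real.exp (t * m - (1 - Real.exp (-t)) *
          (((n:ℝ) - hammingDist Y x) * q + (hammingDist Y x) * p)) :=
        ENNReal.toReal_ofReal (Real.exp_pos _).le

set_option maxHeartbeats 4000000 in
/-- If `‖Y - x‖₁ ≥ 0.5 n^{0.9} - 1`, then a randomized response `x̃ ~ RR_ε(x)` lands
within distance `n/(1 + e^ε) + n^{0.6}` of `Y` with probability at most `exp(-c n^{0.8})`. -/
theorem rr_far_point (ε : ℝ) (hε : 0 < ε) :
    ∃ c > (0 : ℝ), ∃ N : ℕ, ∀ n ≥ N, ∀ x Y : Fin n → Bool,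
      0.5 * (n : ℝ) ^ (0.9 : ℝ) - 1 ≤ (hammingDist Y x : ℝ) →
      pr (RR ε x)
          {xt | (hammingDist Y xt : ℝ) ≤ (n : ℝ) / (1 + Real.exp ε) + (n : ℝ) ^ (0.6 : ℝ)} ≤
        Real.exp (-c * (n : ℝ) ^ (0.8 : ℝ)) := by
  have hE1 : 1 < Real.exp ε := Real.one_lt_exp_iff.mpr hε
  have hEpos : (0:ℝ) < 1 + Real.exp ε := by positivity
  set γ : ℝ := (Real.exp ε - 1) / (1 + Real.exp ε) with hγdef
  have hγ : 0 < γ := by apply div_pos <;> linarith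
  have hγ1 : γ ≤ 1 := by rw [hγdef, div_le_one hEpos]; linarith
  refine ⟨γ ^ 2 / 64, by positivity, ?_⟩
  -- choose N
  have htend : Filter.Tendsto (fun n : ℕ => (n : ℝ) ^ (0.3 : ℝ)) Filter.atTop Filter.atTop :=
    (tendsto_rpow_atTop (by norm_num : (0:ℝ) < 0.3)).comp tendsto_natCast_atTop_atTop
  obtain ⟨N₀, hN₀⟩ := Filter.eventually_atTop.mp
    (htend.eventually_ge_atTop (max 8 (8 / γ)))
  refine ⟨max N₀ 1, ?_⟩
  intro n hn x Y hd
  have hn1 : 1 ≤ n := le_trans (le_max_right _ _) hn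
  have hnR : (1:ℝ) ≤ (n:ℝ) := by exact_mod_cast hn1
  have hnpos : (0:ℝ) < n := by linarith
  have h3 : (8:ℝ) ≤ (n:ℝ) ^ (0.3:ℝ) :=
    le_trans (le_max_left _ _) (hN₀ n (le_trans (le_max_left _ _) hn))
  have h3' : 8 / γ ≤ (n:ℝ) ^ (0.3:ℝ) :=
    le_trans (le_max_right _ _) (hN₀ n (le_trans (le_max_left _ _) hn))
  have h6 : (1:ℝ) ≤ (n:ℝ) ^ (0.6:ℝ) := Real.one_le_rpow hnR (by norm_num)
  have h9eq : (n:ℝ) ^ (0.9:ℝ) = (n:ℝ) ^ (0.3:ℝ) * (n:ℝ) ^ (0.6:ℝ) := by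
    rw [← Real.rpow_add hnpos]; norm_num
  have h18eq : (n:ℝ) ^ (0.9:ℝ) * (n:ℝ) ^ (0.9:ℝ) = (n:ℝ) ^ (0.8:ℝ) * (n:ℝ) := by
    have h1 : (n:ℝ) ^ (0.8:ℝ) * (n:ℝ) = (n:ℝ) ^ (0.8:ℝ) * (n:ℝ) ^ (1:ℝ) := by
      rw [Real.rpow_one]
    rw [h1, ← Real.rpow_add hnpos, ← Real.rpow_add hnpos]
    norm_num
  set q : ℝ := 1 / (1 + Real.exp ε) with hqdef
  set dR : ℝ := (hammingDist Y x : ℝ) with hdRdef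
  have hdn : dR ≤ (n:ℝ) := by
    rw [hdRdef]
    exact_mod_cast (by simpa using hammingDist_le_card_fintype (x := Y) (y := x))
  have hd0 : 0 ≤ dR := by rw [hdRdef]; positivity
  set δ : ℝ := dR * γ - (n:ℝ) ^ (0.6:ℝ) with hδdef
  have h9 : 8 ≤ (n:ℝ) ^ (0.9:ℝ) := by nlinarith
  have hδlb : γ / 4 * (n:ℝ) ^ (0.9:ℝ) ≤ δ := by
    have h1 : γ ≤ γ / 8 * (n:ℝ) ^ (0.9:ℝ) := by nlinarith
    have h2 : (n:ℝ) ^ (0.6:ℝ) ≤ γ / 8 * (n:ℝ) ^ (0.9:ℝ) := by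
      have : 8 / γ * γ = 8 := by field_simp
      nlinarith [Real.rpow_nonneg (le_of_lt hnpos) (0.6:ℝ)]
    have h0 : γ * (0.5 * (n:ℝ) ^ (0.9:ℝ) - 1) ≤ γ * dR :=
      mul_le_mul_of_nonneg_left hd hγ.le
    rw [hδdef]
    nlinarith
  have hδpos : 0 < δ := lt_of_lt_of_le (by positivity) hδlb
  set t : ℝ := δ / (2 * n) with htdef
  have ht0 : 0 < t := by rw [htdef]; exact div_pos hδpos (by linarith)
  have hδn : δ ≤ (n:ℝ) := by
    rw [hδdef]
    nlinarith [mul_le_mul hdn hγ1 hγ.le hnpos.le]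
  have ht1 : t ≤ 1 := by rw [htdef, div_le_one (by linarith)]; linarith
  -- apply chernoff
  have hcher := chernoff ε t ((n : ℝ) / (1 + Real.exp ε) + (n : ℝ) ^ (0.6 : ℝ)) hε ht0.le x Y
  refine le_trans hcher ?_
  apply Real.exp_le_exp.mpr
  -- exponent bound
  set p : ℝ := Real.exp ε / (1 + Real.exp ε) with hpdef
  have hqp : p - q = γ := by rw [hpdef, hqdef, hγdef]; ring
  have hp1 : p ≤ 1 := by rw [hpdef, div_le_one hEpos]; linarith
  set μ : ℝ := ((n:ℝ) - dR) * q + dR * p with hμdef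
  have hμ0 : 0 ≤ μ := by
    have hq0 : 0 ≤ q := by positivity
    have hp0 : 0 ≤ p := by positivity
    rw [hμdef]; nlinarith
  have hμn : μ ≤ (n:ℝ) := by
    have hq1 : q ≤ 1 := by rw [hqdef, div_le_one hEpos]; linarith
    rw [hμdef]; nlinarith
  have hm : (n : ℝ) / (1 + Real.exp ε) + (n : ℝ) ^ (0.6 : ℝ) = μ - δ := by
    rw [hμdef, hδdef, ← hqp]
    have : (n:ℝ) / (1 + Real.exp ε) = (n:ℝ) * q := by rw [hqdef]; ring
    rw [this]; ring
  rw [hm]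
  have hB0 : 0 ≤ t - 1 + Real.exp (-t) := by
    have := Real.add_one_le_exp (-t); linarith
  have hB : t - 1 + Real.exp (-t) ≤ t ^ 2 := by
    have habs : |(-t)| ≤ 1 := by rw [abs_neg, abs_of_nonneg ht0.le]; exact ht1
    have := Real.abs_exp_sub_one_sub_id_le habs
    have h2 := abs_le.mp this
    have := h2.2
    nlinarith [neg_pow (-t) 2]
  have key : t * (μ - δ) - (1 - Real.exp (-t)) * μ ≤ -(δ ^ 2) / (4 * n) := by
    have e1 : t * (μ - δ) - (1 - Real.exp (-t)) * μ
        = -(t * δ) + (t - 1 + Real.exp (-t)) * μ := by ring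
    have e2 : (t - 1 + Real.exp (-t)) * μ ≤ t ^ 2 * (n:ℝ) := by
      nlinarith
    have e3 : -(t * δ) + t ^ 2 * (n:ℝ) = -(δ ^ 2) / (4 * n) := by
      rw [htdef]; field_simp; ring
    rw [e1, ← e3]
    linarith
  refine le_trans key ?_
  -- -(δ²)/(4n) ≤ -(γ²/64) n^{0.8}
  rw [neg_div, neg_mul, neg_le_neg_iff, div_mul_eq_mul_div]
  rw [div_le_div_iff₀ (by norm_num) (by linarith)]
  calc γ ^ 2 * (n:ℝ) ^ (0.8:ℝ) * (4 * (n:ℝ))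
      = 4 * ((γ * (n:ℝ) ^ (0.9:ℝ)) * (γ * (n:ℝ) ^ (0.9:ℝ))) := by
        rw [show γ * (n:ℝ)^(0.9:ℝ) * (γ * (n:ℝ)^(0.9:ℝ))
            = γ^2 * ((n:ℝ)^(0.9:ℝ) * (n:ℝ)^(0.9:ℝ)) by ring, h18eq]
        ring
    _ ≤ 4 * ((4 * δ) * (4 * δ)) := by
        have h1 : 0 ≤ γ * (n:ℝ) ^ (0.9:ℝ) := by positivity
        have h2 : γ * (n:ℝ) ^ (0.9:ℝ) ≤ 4 * δ := by linarith
        nlinarith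
    _ = δ ^ 2 * 64 := by ring
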